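/- For each i ∈ ℤ and each past w ∈ G^{ℕ*}, let μ_{w,i} denote the unique probability measure on G^{{i, i+1, …}} (given by the Ionescu–Tulcea theorem) whose finite-dimensional distributions are μ_{w,i}(η(i) = g_i, …, η(n) = g_n) = ∏_{k=i}^{n} P(g_k | (g_{k−1}, …, g_i, w_{−1}, w_{−2}, …)) for all n ≥ i and g_i, …, g_n ∈ G. Then for all integers i ≤ s ≤ t < ∞, every bounded measurable f : G^{[s,t]} → ℝ, and all pasts w, v ∈ G^{ℕ*}: |∫ f((η(s), …, η(t))) dμ_{w,i}(η) − ∫ f((η(s), …, η(t))) dμ_{v,i}(η)| ≤ 2 ‖f‖_∞ ∑_{j=0}^{t−s} ρ_{s+j−i}, where ρ_n is computed from the house-of-cards chain with the sequence (a_k) derived from P, and ρ_0 := 1. -/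

import Mathlib

set_option linter.unusedSectionVars false
set_option maxHeartbeats 1000000


open MeasureTheory Filter

section

variable {G : Type*} [Countable G] [Nonempty G] [MeasurableSpace G]
  [DiscreteMeasurableSpace G]

/-- `a_k(g | w_{-k},…,w_{-1})`: the infimum of `P(g|·)` over all pasts agreeing with
`w` on the `k` preceding instants. A past `w : ℕ → G` lists `w_{-1}, w_{-2}, …`. -/
noncomputable def akg (P : G → (ℕ → G) → ℝ) (k : ℕ) (g : G) (w : ℕ → G) : ℝ :=
  ⨅ z : ℕ → G, P g (fun n => if n < k then w n else z (n - k))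

/-- `a_k := inf_w ∑_g a_k(g|w)`. -/
noncomputable def akP (P : G → (ℕ → G) → ℝ) (k : ℕ) : ℝ :=
  ⨅ w : ℕ → G, ∑' g : G, akg P k g w

/-- House-of-cards chain: `hoc a u 0 k` is `W^0_k`. -/
noncomputable def hoc (a : ℕ → ℝ) (u : ℤ → ℝ) (m : ℤ) : ℕ → ℕ
  | 0 => 0
  | k + 1 => if u (m + k + 1) < a (hoc a u m k) then hoc a u m k + 1 else 0

/-- Return probability `ρ_k := ℙ(W^0_k = 0)`; note `ρ_0 = 1` automatically. -/
noncomputable def rho (a : ℕ → ℝ) (μ : Measure (ℤ → ℝ)) (k : ℕ) : ENNReal :=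
  μ {u | hoc a u 0 k = 0}

/-- The coordinates are i.i.d. uniform on `[0,1)` under `μ0`. -/
def IsIIDUniform (μ0 : Measure (ℤ → ℝ)) : Prop :=
  ProbabilityTheory.iIndepFun
    (fun i (u : ℤ → ℝ) => u i) μ0 ∧
  ∀ i : ℤ, μ0.map (fun u => u i) = volume.restrict (Set.Ico (0:ℝ) 1)

/-- `μi` has the finite-dimensional distributions of the chain started at time `i`
from the frozen past `w`; coordinate `n : ℕ` stands for time `i + n`, and the past
`w : ℕ → G` lists `w_{-1}, w_{-2}, …`. -/
def HasFdds (P : G → (ℕ → G) → ℝ) (μi : Measure (ℕ → G)) (w : ℕ → G) : Prop :=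
  ∀ (n : ℕ) (gs : ℕ → G),
    μi {η | ∀ m : ℕ, m ≤ n → η m = gs m} =
      ENNReal.ofReal (∏ k ∈ Finset.range (n + 1),
        P (gs k) (fun j => if j < k then gs (k - 1 - j) else w (j - k)))

namespace S11

variable (P : G → (ℕ → G) → ℝ)

section basics
variable (hnn : ∀ g w, 0 ≤ P g w) (hsum : ∀ w, HasSum (fun g => P g w) 1)
include hnn hsum
set_option linter.unusedSectionVars false

lemma akg_nonneg (k : ℕ) (g : G) (h : ℕ → G) : 0 ≤ akg P k g h :=
  Real.iInf_nonneg (fun z => hnn g _)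

lemma akg_bddBelow (k : ℕ) (g : G) (h : ℕ → G) :
    BddBelow (Set.range fun z : ℕ → G => P g (fun n => if n < k then h n else z (n - k))) :=
  ⟨0, by rintro x ⟨z, rfl⟩; exact hnn g _⟩

lemma akg_le (k : ℕ) (g : G) (h : ℕ → G) (z : ℕ → G) :
    akg P k g h ≤ P g (fun n => if n < k then h n else z (n - k)) :=
  ciInf_le (akg_bddBelow P hnn hsum k g h) z

lemma akg_le_self (k : ℕ) (g : G) (h : ℕ → G) : akg P k g h ≤ P g h := by
  have := akg_le P hnn hsum k g h (fun n => h (n + k))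
  convert this using 2
  funext n
  by_cases hn : n < k
  · simp [hn]
  · simp [hn, Nat.sub_add_cancel (le_of_not_gt hn)]

lemma akg_mono_succ (k : ℕ) (g : G) (h : ℕ → G) : akg P k g h ≤ akg P (k+1) g h := by
  refine le_ciInf fun z => ?_
  have := akg_le P hnn hsum k g h (fun n => if n = 0 then h k else z (n - 1))
  refine this.trans_eq ?_
  congr 1
  funext n
  rcases lt_trichotomy n k with hn | rfl | hn
  · simp [hn, Nat.lt_succ_of_lt hn]
  · simp
  · have h1 : ¬ n < k := by omega
    have h2 : ¬ n < k + 1 := by omega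
    have h3 : ¬ n - k = 0 := by omega
    simp only [if_neg h1, if_neg h2, if_neg h3]
    congr 1

lemma akg_mono (g : G) (h : ℕ → G) : Monotone fun k => akg P k g h :=
  monotone_nat_of_le_succ fun k => akg_mono_succ P hnn hsum k g h

lemma akg_congr (k : ℕ) (g : G) (h h' : ℕ → G) (hh : ∀ n < k, h n = h' n) :
    akg P k g h = akg P k g h' := by
  unfold akg
  refine iInf_congr fun z => ?_
  congr 1
  funext n
  by_cases hn : n < k <;> simp [hn, hh n]

lemma summable_P (h : ℕ → G) : Summable (fun g => P g h) := (hsum h).summable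

lemma summable_akg (k : ℕ) (h : ℕ → G) : Summable (fun g => akg P k g h) :=
  Summable.of_nonneg_of_le (fun g => akg_nonneg P hnn hsum k g h)
    (fun g => akg_le_self P hnn hsum k g h) (summable_P P hnn hsum h)

omit hnn hsum

/-- `b_k(h) = ∑_g a_k(g|h)`. -/
noncomputable def bsum (k : ℕ) (h : ℕ → G) : ℝ := ∑' g, akg P k g h

/-- `a_∞(g|h) = sup_k a_k(g|h)`. -/
noncomputable def aInf (g : G) (h : ℕ → G) : ℝ := ⨆ k, akg P k g h

/-- `S(h) = ∑_g a_∞(g|h)`. -/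
noncomputable def Ssum (h : ℕ → G) : ℝ := ∑' g, aInf P g h

/-- level lengths -/
noncomputable def lv : ℕ → G → (ℕ → G) → ℝ
  | 0, g, h => akg P 0 g h
  | (k+1), g, h => akg P (k+1) g h - akg P k g h

/-- cumulative level starts: `Bf 0 = 0`, `Bf (k+1) = bsum k`. -/
noncomputable def Bf : ℕ → (ℕ → G) → ℝ
  | 0, _ => 0
  | (k+1), h => bsum P k h

include hnn hsum

lemma bsum_nonneg (k : ℕ) (h : ℕ → G) : 0 ≤ bsum P k h :=
  tsum_nonneg fun g => akg_nonneg P hnn hsum k g h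

lemma bsum_le_one (k : ℕ) (h : ℕ → G) : bsum P k h ≤ 1 := by
  have := Summable.tsum_le_tsum (fun g => akg_le_self P hnn hsum k g h)
    (summable_akg P hnn hsum k h) (summable_P P hnn hsum h)
  rwa [(hsum h).tsum_eq] at this

lemma bsum_mono (h : ℕ → G) : Monotone fun k => bsum P k h :=
  monotone_nat_of_le_succ fun k => Summable.tsum_le_tsum
    (fun g => akg_mono_succ P hnn hsum k g h)
    (summable_akg P hnn hsum k h) (summable_akg P hnn hsum (k+1) h)

lemma bsum_congr (k : ℕ) (h h' : ℕ → G) (hh : ∀ n < k, h n = h' n) :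
    bsum P k h = bsum P k h' :=
  tsum_congr fun g => akg_congr P hnn hsum k g h h' hh

lemma aInf_bdd (g : G) (h : ℕ → G) : BddAbove (Set.range fun k => akg P k g h) :=
  ⟨P g h, by rintro x ⟨k, rfl⟩; exact akg_le_self P hnn hsum k g h⟩

lemma aInf_nonneg (g : G) (h : ℕ → G) : 0 ≤ aInf P g h :=
  le_ciSup_of_le (aInf_bdd P hnn hsum g h) 0 (akg_nonneg P hnn hsum 0 g h)

lemma aInf_le_P (g : G) (h : ℕ → G) : aInf P g h ≤ P g h :=
  ciSup_le fun k => akg_le_self P hnn hsum k g h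

lemma akg_le_aInf (k : ℕ) (g : G) (h : ℕ → G) : akg P k g h ≤ aInf P g h :=
  le_ciSup (aInf_bdd P hnn hsum g h) k

lemma summable_aInf (h : ℕ → G) : Summable (fun g => aInf P g h) :=
  Summable.of_nonneg_of_le (fun g => aInf_nonneg P hnn hsum g h)
    (fun g => aInf_le_P P hnn hsum g h) (summable_P P hnn hsum h)

lemma Ssum_le_one (h : ℕ → G) : Ssum P h ≤ 1 := by
  have := Summable.tsum_le_tsum (fun g => aInf_le_P P hnn hsum g h)
    (summable_aInf P hnn hsum h) (summable_P P hnn hsum h)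
  rwa [(hsum h).tsum_eq] at this

lemma bsum_le_Ssum (k : ℕ) (h : ℕ → G) : bsum P k h ≤ Ssum P h :=
  Summable.tsum_le_tsum (fun g => akg_le_aInf P hnn hsum k g h)
    (summable_akg P hnn hsum k h) (summable_aInf P hnn hsum h)

lemma akg_tendsto (g : G) (h : ℕ → G) :
    Tendsto (fun k => akg P k g h) atTop (nhds (aInf P g h)) :=
  tendsto_atTop_ciSup (akg_mono P hnn hsum g h) (aInf_bdd P hnn hsum g h)

lemma bsum_bdd (h : ℕ → G) : BddAbove (Set.range fun k => bsum P k h) :=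
  ⟨1, by rintro x ⟨k, rfl⟩; exact bsum_le_one P hnn hsum k h⟩

lemma Ssum_eq_sup (h : ℕ → G) : Ssum P h = ⨆ k, bsum P k h := by
  refine le_antisymm ?_ (ciSup_le fun k => bsum_le_Ssum P hnn hsum k h)
  refine Summable.tsum_le_of_sum_le (summable_aInf P hnn hsum h) fun F => ?_
  have hlim : Tendsto (fun k => ∑ g ∈ F, akg P k g h) atTop
      (nhds (∑ g ∈ F, aInf P g h)) :=
    tendsto_finset_sum F fun g _ => akg_tendsto P hnn hsum g h
  refine le_of_tendsto hlim (Eventually.of_forall fun k => ?_)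
  calc ∑ g ∈ F, akg P k g h ≤ bsum P k h :=
        Summable.sum_le_tsum F (fun g _ => akg_nonneg P hnn hsum k g h) (summable_akg P hnn hsum k h)
    _ ≤ ⨆ k, bsum P k h := le_ciSup (bsum_bdd P hnn hsum h) k

lemma lv_nonneg (k : ℕ) (g : G) (h : ℕ → G) : 0 ≤ lv P k g h := by
  cases k with
  | zero => exact akg_nonneg P hnn hsum 0 g h
  | succ k => exact sub_nonneg.2 (akg_mono_succ P hnn hsum k g h)

omit hnn hsum in
lemma sum_range_lv (k : ℕ) (g : G) (h : ℕ → G) :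
    ∑ j ∈ Finset.range (k+1), lv P j g h = akg P k g h := by
  induction k with
  | zero => simp [lv]
  | succ k ih => rw [Finset.sum_range_succ, ih]; simp [lv]

lemma lv_le_akg (k : ℕ) (g : G) (h : ℕ → G) : lv P k g h ≤ akg P k g h := by
  cases k with
  | zero => exact le_rfl
  | succ k => exact sub_le_self _ (akg_nonneg P hnn hsum k g h)

lemma summable_lv_g (k : ℕ) (h : ℕ → G) : Summable (fun g => lv P k g h) :=
  Summable.of_nonneg_of_le (fun g => lv_nonneg P hnn hsum k g h)
    (fun g => (lv_le_akg P hnn hsum k g h).trans (akg_le_self P hnn hsum k g h))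
    (summable_P P hnn hsum h)

lemma tsum_lv_g (k : ℕ) (h : ℕ → G) : ∑' g, lv P k g h = bsum P k h - Bf P k h := by
  cases k with
  | zero => simp [lv, Bf, bsum]
  | succ k =>
      have : (fun g => lv P (k+1) g h) = fun g => akg P (k+1) g h - akg P k g h := rfl
      rw [this, Summable.tsum_sub (summable_akg P hnn hsum (k+1) h) (summable_akg P hnn hsum k h)]
      rfl

lemma summable_lv_k (g : G) (h : ℕ → G) : Summable (fun k => lv P k g h) := by
  refine summable_of_sum_range_le (c := P g h) (fun k => lv_nonneg P hnn hsum k g h) fun n => ?_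
  cases n with
  | zero => simpa using hnn g h
  | succ n => rw [sum_range_lv]; exact akg_le_self P hnn hsum n g h

lemma tsum_lv_k (g : G) (h : ℕ → G) : ∑' k, lv P k g h = aInf P g h := by
  have h1 : Tendsto (fun n => ∑ j ∈ Finset.range n, lv P j g h) atTop
      (nhds (∑' k, lv P k g h)) := (summable_lv_k P hnn hsum g h).hasSum.tendsto_sum_nat
  have h2 : Tendsto (fun n => ∑ j ∈ Finset.range (n+1), lv P j g h) atTop
      (nhds (∑' k, lv P k g h)) := h1.comp (tendsto_add_atTop_nat 1)
  have h3 : (fun n => ∑ j ∈ Finset.range (n+1), lv P j g h) = fun n => akg P n g h := by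
    funext n; exact sum_range_lv P n g h
  rw [h3] at h2
  exact tendsto_nhds_unique h2 (akg_tendsto P hnn hsum g h)

lemma Bf_eq_bsum (k : ℕ) (h : ℕ → G) : Bf P (k+1) h = bsum P k h := rfl

lemma Bf_le_bsum (k : ℕ) (h : ℕ → G) : Bf P k h ≤ bsum P k h := by
  cases k with
  | zero => exact bsum_nonneg P hnn hsum 0 h
  | succ k => exact bsum_mono P hnn hsum h (Nat.le_succ k)

lemma Bf_nonneg (k : ℕ) (h : ℕ → G) : 0 ≤ Bf P k h := by
  cases k with
  | zero => exact le_rfl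
  | succ k => exact bsum_nonneg P hnn hsum k h

lemma Bf_congr (k : ℕ) (h h' : ℕ → G) (hh : ∀ n < k, h n = h' n) :
    Bf P k h = Bf P k h' := by
  cases k with
  | zero => rfl
  | succ k => exact bsum_congr P hnn hsum k h h' (fun n hn => hh n (Nat.lt_succ_of_lt hn))

end basics

/-- least `n` with `x < c 0 + … + c n`. -/
noncomputable def pick (c : ℕ → ℝ) (x : ℝ) : ℕ :=
  sInf {n | x < ∑ m ∈ Finset.range (n+1), c m}

lemma pick_eq {c : ℕ → ℝ} (hc : ∀ m, 0 ≤ c m) {x : ℝ} {n : ℕ}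
    (h1 : ∑ m ∈ Finset.range n, c m ≤ x) (h2 : x < ∑ m ∈ Finset.range (n+1), c m) :
    pick c x = n := by
  refine le_antisymm (Nat.sInf_le h2) (le_csInf ⟨n, h2⟩ ?_)
  intro m hm
  by_contra hmn
  push_neg at hmn
  have hsub : Finset.range (m+1) ⊆ Finset.range n := by
    intro j hj; simp at hj ⊢; omega
  have hle : ∑ j ∈ Finset.range (m+1), c j ≤ ∑ j ∈ Finset.range n, c j :=
    Finset.sum_le_sum_of_subset_of_nonneg hsub (fun j _ _ => hc j)
  have : x < x := lt_of_lt_of_le hm (hle.trans h1)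
  exact absurd this (lt_irrefl x)

lemma pick_spec {c : ℕ → ℝ} {x : ℝ} (h0 : 0 ≤ x)
    (hex : ∃ n, x < ∑ m ∈ Finset.range (n+1), c m) :
    ∑ m ∈ Finset.range (pick c x), c m ≤ x ∧
      x < ∑ m ∈ Finset.range (pick c x + 1), c m := by
  refine ⟨?_, Nat.sInf_mem hex⟩
  rcases hp : pick c x with _ | m
  · simpa using h0
  · have hm : m < pick c x := by omega
    have := Nat.notMem_of_lt_sInf hm
    simp only [Set.mem_setOf_eq, not_lt] at this
    exact this

lemma measurable_pickP {α : Type*} [MeasurableSpace α] (p : ℕ → α → Prop)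
    (hp : ∀ n, MeasurableSet {x | p n x}) :
    Measurable fun x => sInf {n | p n x} := by
  apply measurable_to_countable'
  intro k
  have heq : (fun x => sInf {n | p n x}) ⁻¹' {k} =
      ({x | p k x} ∩ ⋂ m ∈ Finset.range k, {x | ¬ p m x}) ∪
        (if k = 0 then ⋂ n, {x | ¬ p n x} else ∅) := by
    ext x
    simp only [Set.mem_preimage, Set.mem_singleton_iff, Set.mem_union, Set.mem_inter_iff,
      Set.mem_setOf_eq, Set.mem_iInter, Finset.mem_range]
    constructor
    · intro hk
      by_cases hne : {n | p n x}.Nonempty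
      · left
        have h1 : p k x := by rw [← hk]; exact Nat.sInf_mem hne
        refine ⟨h1, fun m hm hpm => ?_⟩
        have : k ≤ m := by rw [← hk]; exact Nat.sInf_le hpm
        omega
      · right
        rw [Set.not_nonempty_iff_eq_empty] at hne
        have h0 : k = 0 := by rw [← hk, hne, Nat.sInf_empty]
        rw [if_pos h0]
        refine Set.mem_iInter.2 fun n => ?_
        show ¬ p n x
        intro hpn
        have hmem : n ∈ {n | p n x} := hpn
        rw [hne] at hmem
        exact hmem
    · rintro (⟨hpk, hmin⟩ | hrest)
      · refine le_antisymm (Nat.sInf_le hpk) (le_csInf ⟨k, hpk⟩ fun m hm => ?_)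
        by_contra hmk
        push_neg at hmk
        exact hmin m hmk hm
      · by_cases h0 : k = 0
        · rw [if_pos h0] at hrest
          subst h0
          replace hrest := fun n => Set.mem_iInter.1 hrest n
          have : {n | p n x} = ∅ := by
            ext n; simp only [Set.mem_setOf_eq, Set.mem_empty_iff_false, iff_false]
            exact hrest n
          rw [this, Nat.sInf_empty]
        · rw [if_neg h0] at hrest
          exact absurd hrest (Set.notMem_empty x)
  rw [heq]
  refine MeasurableSet.union (MeasurableSet.inter (hp k) ?_) ?_
  · exact MeasurableSet.biInter (Finset.countable_toSet _) fun m _ => (hp m).compl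
  · split
    · exact MeasurableSet.iInter fun n => (hp n).compl
    · exact MeasurableSet.empty

section enc
variable [Encodable G]

/-- extend a function on `G` to `ℕ` via `decode₂`. -/
noncomputable def dex (f : G → ℝ) (n : ℕ) : ℝ := ((Encodable.decode₂ G n).map f).getD 0

lemma dex_encode (f : G → ℝ) (g : G) : dex f (Encodable.encode g) = f g := by
  simp [dex, Encodable.decode₂_encode]

lemma dex_zero (f : G → ℝ) {n : ℕ} (hn : n ∉ Set.range (Encodable.encode : G → ℕ)) :
    dex f n = 0 := by
  rcases hdec : Encodable.decode₂ G n with _ | g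
  · simp [dex, hdec]
  · exact absurd ⟨g, Encodable.decode₂_eq_some.1 hdec⟩ hn

lemma dex_nonneg {f : G → ℝ} (hf : ∀ g, 0 ≤ f g) (n : ℕ) : 0 ≤ dex f n := by
  rcases hdec : Encodable.decode₂ G n with _ | g <;> simp [dex, hdec, hf]

lemma dex_comp_encode (f : G → ℝ) : dex f ∘ (Encodable.encode : G → ℕ) = f :=
  funext fun g => dex_encode f g

lemma summable_dex {f : G → ℝ} (hf : Summable f) : Summable (dex f) := by
  have := (Encodable.encode_injective (α := G)).summable_iff
    (f := dex f) (fun n hn => dex_zero f hn)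
  rw [← this, dex_comp_encode]
  exact hf

lemma tsum_dex (f : G → ℝ) : ∑' n, dex f n = ∑' g, f g := by
  have h := (Encodable.encode_injective (α := G)).tsum_eq
    (f := dex f) (by
      intro n hn
      by_contra hr
      exact hn (dex_zero f hr))
  rw [← h]
  exact tsum_congr fun g => dex_encode f g


variable (hnn : ∀ g w, 0 ≤ P g w) (hsum : ∀ w, HasSum (fun g => P g w) 1)

/-- The partition map: given `x ∈ [0,1)` and a past `h`, pick a symbol. -/
noncomputable def phi (x : ℝ) (h : ℕ → G) : G :=
  if x < Ssum P h then
    (Encodable.decode₂ G (pick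
        (dex (fun g => lv P (pick (fun j => bsum P j h - Bf P j h) x) g h))
        (x - Bf P (pick (fun j => bsum P j h - Bf P j h) x) h))).getD (Classical.arbitrary G)
  else
    (Encodable.decode₂ G (pick (dex (fun g => P g h - aInf P g h)) (x - Ssum P h))).getD
      (Classical.arbitrary G)

include hnn hsum

lemma sum_range_binc (h : ℕ → G) (n : ℕ) :
    ∑ j ∈ Finset.range n, (bsum P j h - Bf P j h) = Bf P n h := by
  induction n with
  | zero => simp [Bf]
  | succ n ih =>
      rw [Finset.sum_range_succ, ih]
      show _ = bsum P n h
      ring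

lemma binc_nonneg (h : ℕ → G) (j : ℕ) : 0 ≤ bsum P j h - Bf P j h :=
  sub_nonneg.2 (Bf_le_bsum P hnn hsum j h)

lemma csum_lv_le (k : ℕ) (h : ℕ → G) (n : ℕ) :
    ∑ m ∈ Finset.range n, dex (fun g => lv P k g h) m ≤ bsum P k h - Bf P k h := by
  have h1 : ∑ m ∈ Finset.range n, dex (fun g => lv P k g h) m ≤
      ∑' m, dex (fun g => lv P k g h) m :=
    Summable.sum_le_tsum _ (fun m _ => dex_nonneg (fun g => lv_nonneg P hnn hsum k g h) m)
      (summable_dex (summable_lv_g P hnn hsum k h))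
  rw [tsum_dex, tsum_lv_g P hnn hsum] at h1
  exact h1

lemma csum_left_le (h : ℕ → G) (n : ℕ) :
    ∑ m ∈ Finset.range n, dex (fun g => P g h - aInf P g h) m ≤ 1 - Ssum P h := by
  have h1 : ∑ m ∈ Finset.range n, dex (fun g => P g h - aInf P g h) m ≤
      ∑' m, dex (fun g => P g h - aInf P g h) m :=
    Summable.sum_le_tsum _ (fun m _ => dex_nonneg (fun g => sub_nonneg.2 (aInf_le_P P hnn hsum g h)) m)
      (summable_dex ((summable_P P hnn hsum h).sub (summable_aInf P hnn hsum h)))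
  rw [tsum_dex, Summable.tsum_sub (summable_P P hnn hsum h) (summable_aInf P hnn hsum h),
    (hsum h).tsum_eq] at h1
  exact h1

lemma phi_eq_of_mem_level {x : ℝ} (h : ℕ → G) (k : ℕ) (g : G)
    (hx1 : Bf P k h + ∑ m ∈ Finset.range (Encodable.encode g),
      dex (fun g' => lv P k g' h) m ≤ x)
    (hx2 : x < Bf P k h + (∑ m ∈ Finset.range (Encodable.encode g),
      dex (fun g' => lv P k g' h) m) + lv P k g h) :
    phi P x h = g := by
  set cs : ℝ := ∑ m ∈ Finset.range (Encodable.encode g), dex (fun g' => lv P k g' h) m with hcs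
  have hcs1 : cs + lv P k g h = ∑ m ∈ Finset.range (Encodable.encode g + 1),
      dex (fun g' => lv P k g' h) m := by
    rw [Finset.sum_range_succ, dex_encode]
  have hxb : x < bsum P k h := by
    have := csum_lv_le P hnn hsum k h (Encodable.encode g + 1)
    rw [← hcs1] at this
    linarith
  have hxS : x < Ssum P h := hxb.trans_le (bsum_le_Ssum P hnn hsum k h)
  have hK : pick (fun j => bsum P j h - Bf P j h) x = k := by
    refine pick_eq (binc_nonneg P hnn hsum h) ?_ ?_
    · rw [sum_range_binc P hnn hsum]
      have hcs0 : 0 ≤ cs :=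
        Finset.sum_nonneg fun m _ => dex_nonneg (fun g' => lv_nonneg P hnn hsum k g' h) m
      linarith
    · rw [sum_range_binc P hnn hsum]
      exact hxb
  have hN : pick (dex (fun g' => lv P k g' h)) (x - Bf P k h) = Encodable.encode g := by
    refine pick_eq (dex_nonneg (fun g' => lv_nonneg P hnn hsum k g' h)) ?_ ?_
    · rw [← hcs]; linarith
    · rw [← hcs1]; linarith
  rw [phi, if_pos hxS, hK, hN, Encodable.decode₂_encode]
  rfl

lemma phi_eq_of_mem_left {x : ℝ} (h : ℕ → G) (g : G)
    (hx1 : Ssum P h + ∑ m ∈ Finset.range (Encodable.encode g),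
      dex (fun g' => P g' h - aInf P g' h) m ≤ x)
    (hx2 : x < Ssum P h + (∑ m ∈ Finset.range (Encodable.encode g),
      dex (fun g' => P g' h - aInf P g' h) m) + (P g h - aInf P g h)) :
    phi P x h = g := by
  set cs : ℝ := ∑ m ∈ Finset.range (Encodable.encode g),
    dex (fun g' => P g' h - aInf P g' h) m with hcs
  have hcs0 : 0 ≤ cs :=
    Finset.sum_nonneg fun m _ =>
      dex_nonneg (fun g' => sub_nonneg.2 (aInf_le_P P hnn hsum g' h)) m
  have hxS : ¬ x < Ssum P h := not_lt.2 (by linarith)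
  have hcs1 : cs + (P g h - aInf P g h) = ∑ m ∈ Finset.range (Encodable.encode g + 1),
      dex (fun g' => P g' h - aInf P g' h) m := by
    rw [Finset.sum_range_succ, dex_encode]
  have hN : pick (dex (fun g' => P g' h - aInf P g' h)) (x - Ssum P h) =
      Encodable.encode g := by
    refine pick_eq (dex_nonneg (fun g' => sub_nonneg.2 (aInf_le_P P hnn hsum g' h))) ?_ ?_
    · rw [← hcs]; linarith
    · rw [← hcs1]; linarith
  rw [phi, if_neg hxS, hN, Encodable.decode₂_encode]
  rfl

lemma phi_mem {x : ℝ} (h : ℕ → G) (h0 : 0 ≤ x) (h1 : x < 1) :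
    (∃ k, Bf P k h + ∑ m ∈ Finset.range (Encodable.encode (phi P x h)),
        dex (fun g' => lv P k g' h) m ≤ x ∧
      x < Bf P k h + (∑ m ∈ Finset.range (Encodable.encode (phi P x h)),
        dex (fun g' => lv P k g' h) m) + lv P k (phi P x h) h) ∨
    (Ssum P h + ∑ m ∈ Finset.range (Encodable.encode (phi P x h)),
        dex (fun g' => P g' h - aInf P g' h) m ≤ x ∧
      x < Ssum P h + (∑ m ∈ Finset.range (Encodable.encode (phi P x h)),
        dex (fun g' => P g' h - aInf P g' h) m) + (P (phi P x h) h - aInf P (phi P x h) h)) := by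
  by_cases hxS : x < Ssum P h
  · left
    set K := pick (fun j => bsum P j h - Bf P j h) x with hKdef
    have hex : ∃ n, x < ∑ m ∈ Finset.range (n+1), (bsum P m h - Bf P m h) := by
      rw [Ssum_eq_sup P hnn hsum] at hxS
      obtain ⟨n, hn⟩ := (lt_ciSup_iff (bsum_bdd P hnn hsum h)).1 hxS
      exact ⟨n, by rw [sum_range_binc P hnn hsum]; exact hn⟩
    obtain ⟨hK1, hK2⟩ := pick_spec h0 hex
    rw [sum_range_binc P hnn hsum] at hK1 hK2
    have hK2' : x < bsum P K h := hK2
    have hy0 : 0 ≤ x - Bf P K h := by linarith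
    have hex2 : ∃ n, x - Bf P K h <
        ∑ m ∈ Finset.range (n+1), dex (fun g' => lv P K g' h) m := by
      by_contra hcon
      push_neg at hcon
      have hts : ∑' m, dex (fun g' => lv P K g' h) m ≤ x - Bf P K h := by
        refine Summable.tsum_le_of_sum_range_le (summable_dex (summable_lv_g P hnn hsum K h)) ?_
        intro n
        cases n with
        | zero => simpa using hy0
        | succ n => exact hcon n
      rw [tsum_dex, tsum_lv_g P hnn hsum] at hts
      linarith
    obtain ⟨hn1, hn2⟩ := pick_spec hy0 hex2
    set N := pick (dex (fun g' => lv P K g' h)) (x - Bf P K h) with hNdef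
    rw [Finset.sum_range_succ] at hn2
    have hpos : 0 < dex (fun g' => lv P K g' h) N := by linarith
    rcases hdec : Encodable.decode₂ G N with _ | g₀
    · rw [dex, hdec] at hpos; simp at hpos
    have hNe : Encodable.encode g₀ = N := Encodable.decode₂_eq_some.1 hdec
    have hdexN : dex (fun g' => lv P K g' h) N = lv P K g₀ h := by
      rw [dex, hdec]; rfl
    have hphi : phi P x h = g₀ := by
      rw [phi, if_pos hxS, ← hKdef, ← hNdef, hdec]; rfl
    refine ⟨K, ?_, ?_⟩ <;> rw [hphi, hNe]
    · linarith
    · rw [hdexN] at hn2; linarith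
  · right
    have hy0 : 0 ≤ x - Ssum P h := by linarith [not_lt.1 hxS]
    have hex2 : ∃ n, x - Ssum P h <
        ∑ m ∈ Finset.range (n+1), dex (fun g' => P g' h - aInf P g' h) m := by
      by_contra hcon
      push_neg at hcon
      have hts : ∑' m, dex (fun g' => P g' h - aInf P g' h) m ≤ x - Ssum P h := by
        refine Summable.tsum_le_of_sum_range_le
          (summable_dex ((summable_P P hnn hsum h).sub (summable_aInf P hnn hsum h))) ?_
        intro n
        cases n with
        | zero => simpa using hy0
        | succ n => exact hcon n
      rw [tsum_dex, Summable.tsum_sub (summable_P P hnn hsum h) (summable_aInf P hnn hsum h),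
        (hsum h).tsum_eq] at hts
      have hSS : Ssum P h = ∑' b, aInf P b h := rfl
      rw [← hSS] at hts
      linarith
    obtain ⟨hn1, hn2⟩ := pick_spec hy0 hex2
    set N := pick (dex (fun g' => P g' h - aInf P g' h)) (x - Ssum P h) with hNdef
    rw [Finset.sum_range_succ] at hn2
    have hpos : 0 < dex (fun g' => P g' h - aInf P g' h) N := by linarith
    rcases hdec : Encodable.decode₂ G N with _ | g₀
    · rw [dex, hdec] at hpos; simp at hpos
    have hNe : Encodable.encode g₀ = N := Encodable.decode₂_eq_some.1 hdec
    have hdexN : dex (fun g' => P g' h - aInf P g' h) N = P g₀ h - aInf P g₀ h := by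
      rw [dex, hdec]; rfl
    have hphi : phi P x h = g₀ := by
      rw [phi, if_neg hxS, ← hNdef, hdec]; rfl
    constructor <;> rw [hphi, hNe]
    · linarith
    · rw [hdexN] at hn2; linarith


lemma lv_congr (k : ℕ) (g : G) (h h' : ℕ → G) (hag : ∀ n < k, h n = h' n) :
    lv P k g h = lv P k g h' := by
  cases k with
  | zero =>
      show akg P 0 g h = akg P 0 g h'
      exact akg_congr P hnn hsum 0 g h h' (by omega)
  | succ k =>
      show akg P (k+1) g h - akg P k g h = akg P (k+1) g h' - akg P k g h'
      rw [akg_congr P hnn hsum (k+1) g h h' hag,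
        akg_congr P hnn hsum k g h h' (fun n hn => hag n (by omega))]

lemma akP_le_bsum (k : ℕ) (h : ℕ → G) : akP P k ≤ bsum P k h :=
  ciInf_le ⟨0, by rintro y ⟨hh, rfl⟩; exact bsum_nonneg P hnn hsum k hh⟩ h

lemma Ssum_nonneg (h : ℕ → G) : 0 ≤ Ssum P h :=
  tsum_nonneg fun g => aInf_nonneg P hnn hsum g h

lemma Bf_mono (h : ℕ → G) : Monotone fun k => Bf P k h :=
  monotone_nat_of_le_succ fun k => Bf_le_bsum P hnn hsum k h

/-- (P2): for `x` below the global `a_k`, `phi x ·` only depends on the first `k`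
coordinates of the past. -/
lemma phi_congr (k : ℕ) {x : ℝ} (hx : x < akP P k) (h h' : ℕ → G)
    (hag : ∀ n < k, h n = h' n) : phi P x h = phi P x h' := by
  have hbh : x < bsum P k h := hx.trans_le (akP_le_bsum P hnn hsum k h)
  have hbh' : x < bsum P k h' := hx.trans_le (akP_le_bsum P hnn hsum k h')
  have hS : x < Ssum P h := hbh.trans_le (bsum_le_Ssum P hnn hsum k h)
  have hS' : x < Ssum P h' := hbh'.trans_le (bsum_le_Ssum P hnn hsum k h')
  have hmem : ∀ hh : ℕ → G, x < bsum P k hh →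
      k ∈ {n | x < ∑ m ∈ Finset.range (n+1), (bsum P m hh - Bf P m hh)} := by
    intro hh hb
    show x < ∑ m ∈ Finset.range (k+1), (bsum P m hh - Bf P m hh)
    rw [sum_range_binc P hnn hsum]
    exact hb
  have hKle : pick (fun j => bsum P j h - Bf P j h) x ≤ k := Nat.sInf_le (hmem h hbh)
  have hKle' : pick (fun j => bsum P j h' - Bf P j h') x ≤ k := Nat.sInf_le (hmem h' hbh')
  have hKK : pick (fun j => bsum P j h - Bf P j h) x =
      pick (fun j => bsum P j h' - Bf P j h') x := by
    have key : ∀ n ≤ k, (x < ∑ m ∈ Finset.range (n+1), (bsum P m h - Bf P m h)) ↔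
        (x < ∑ m ∈ Finset.range (n+1), (bsum P m h' - Bf P m h')) := by
      intro n hn
      rw [sum_range_binc P hnn hsum, sum_range_binc P hnn hsum, Bf_eq_bsum P hnn hsum,
        Bf_eq_bsum P hnn hsum, bsum_congr P hnn hsum n h h' (fun m hm => hag m (by omega))]
    refine le_antisymm (Nat.sInf_le ?_) (Nat.sInf_le ?_)
    · have hmm := Nat.sInf_mem ⟨k, hmem h' hbh'⟩
      have hle := hKle'
      exact (key _ hle).2 hmm
    · have hmm := Nat.sInf_mem ⟨k, hmem h hbh⟩
      have hle := hKle
      exact (key _ hle).1 hmm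
  set K := pick (fun j => bsum P j h - Bf P j h) x with hKdef
  have hBfK : Bf P K h = Bf P K h' :=
    Bf_congr P hnn hsum K h h' (fun n hn => hag n (by omega))
  have hlvK : (fun g' => lv P K g' h) = fun g' => lv P K g' h' :=
    funext fun g' => lv_congr P hnn hsum K g' h h' (fun n hn => hag n (by omega))
  rw [phi, phi, if_pos hS, if_pos hS', ← hKK, ← hBfK, ← hlvK]

/-- (P1): the slice of `[0,1)` mapped to `g` has measure exactly `P g h`. -/
lemma phi_vol (h : ℕ → G) (g : G) :
    volume ((fun x => phi P x h) ⁻¹' {g} ∩ Set.Ico (0:ℝ) 1) = ENNReal.ofReal (P g h) := by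
  set cs : ℕ → ℝ := fun k => ∑ m ∈ Finset.range (Encodable.encode g),
    dex (fun g' => lv P k g' h) m with hcsdef
  set u : ℕ → ℝ := fun k => Bf P k h + cs k with hudef
  set csL : ℝ := ∑ m ∈ Finset.range (Encodable.encode g),
    dex (fun g' => P g' h - aInf P g' h) m with hcsLdef
  set uL : ℝ := Ssum P h + csL with huLdef
  have hcs0 : ∀ k, 0 ≤ cs k := fun k =>
    Finset.sum_nonneg fun m _ => dex_nonneg (fun g' => lv_nonneg P hnn hsum k g' h) m
  have hcsL0 : 0 ≤ csL :=
    Finset.sum_nonneg fun m _ =>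
      dex_nonneg (fun g' => sub_nonneg.2 (aInf_le_P P hnn hsum g' h)) m
  have hub : ∀ k, u k + lv P k g h ≤ bsum P k h := by
    intro k
    have h1 := csum_lv_le P hnn hsum k h (Encodable.encode g + 1)
    rw [Finset.sum_range_succ, dex_encode] at h1
    have : cs k + lv P k g h ≤ bsum P k h - Bf P k h := h1
    simp only [hudef]
    linarith
  have hubL : uL + (P g h - aInf P g h) ≤ 1 := by
    have h1 := csum_left_le P hnn hsum h (Encodable.encode g + 1)
    rw [Finset.sum_range_succ, dex_encode] at h1
    have : csL + (P g h - aInf P g h) ≤ 1 - Ssum P h := h1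
    simp only [huLdef]
    linarith
  have hu0 : ∀ k, 0 ≤ u k := fun k => add_nonneg (Bf_nonneg P hnn hsum k h) (hcs0 k)
  have huL0 : 0 ≤ uL := add_nonneg (Ssum_nonneg P hnn hsum h) hcsL0
  have hset : (fun x => phi P x h) ⁻¹' {g} ∩ Set.Ico (0:ℝ) 1 =
      (⋃ k, Set.Ico (u k) (u k + lv P k g h)) ∪ Set.Ico uL (uL + (P g h - aInf P g h)) := by
    ext x
    simp only [Set.mem_inter_iff, Set.mem_preimage, Set.mem_singleton_iff, Set.mem_Ico,
      Set.mem_union, Set.mem_iUnion]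
    constructor
    · rintro ⟨hphi, hx0, hx1⟩
      rcases phi_mem P hnn hsum h hx0 hx1 with ⟨k, ha, hb⟩ | ⟨ha, hb⟩
      · rw [hphi] at ha hb
        exact Or.inl ⟨k, by simp only [hudef]; constructor <;> linarith⟩
      · rw [hphi] at ha hb
        exact Or.inr (by simp only [huLdef]; constructor <;> linarith)
    · rintro (⟨k, ha, hb⟩ | ⟨ha, hb⟩)
      · have hphi : phi P x h = g := by
          refine phi_eq_of_mem_level P hnn hsum h k g ?_ ?_
          · simp only [hudef] at ha; linarith
          · simp only [hudef] at hb; linarith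
        refine ⟨hphi, le_trans (hu0 k) ha, ?_⟩
        calc x < u k + lv P k g h := hb
          _ ≤ bsum P k h := hub k
          _ ≤ 1 := bsum_le_one P hnn hsum k h
      · have hphi : phi P x h = g := by
          refine phi_eq_of_mem_left P hnn hsum h g ?_ ?_
          · simp only [huLdef] at ha; linarith
          · simp only [huLdef] at hb; linarith
        exact ⟨hphi, le_trans huL0 ha, lt_of_lt_of_le hb hubL⟩
  have hsub : ∀ k, u k + lv P k g h ≤ Bf P (k+1) h := fun k => hub k
  have hkey : ∀ k k', k < k' → Disjoint (Set.Ico (u k) (u k + lv P k g h))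
      (Set.Ico (u k') (u k' + lv P k' g h)) := by
    intro k k' hlt
    refine Set.disjoint_left.2 fun x hx hx' => ?_
    have h1 : x < Bf P (k+1) h := lt_of_lt_of_le hx.2 (hsub k)
    have h2 : Bf P (k+1) h ≤ Bf P k' h := Bf_mono P hnn hsum h hlt
    have h3 : Bf P k' h ≤ u k' := le_add_of_nonneg_right (hcs0 k')
    have h4 := hx'.1
    linarith
  have hpair : Pairwise (Function.onFun Disjoint
      fun k => Set.Ico (u k) (u k + lv P k g h)) := by
    intro k k' hkk
    rcases lt_or_gt_of_ne hkk with hlt | hlt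
    · exact hkey k k' hlt
    · exact (hkey k' k hlt).symm
  have hdisjL : Disjoint (⋃ k, Set.Ico (u k) (u k + lv P k g h))
      (Set.Ico uL (uL + (P g h - aInf P g h))) := by
    refine Set.disjoint_left.2 fun x hx hx' => ?_
    obtain ⟨k, hk⟩ := Set.mem_iUnion.1 hx
    have h1 : x < bsum P k h := lt_of_lt_of_le hk.2 (hub k)
    have h2 : bsum P k h ≤ Ssum P h := bsum_le_Ssum P hnn hsum k h
    have h3 : Ssum P h ≤ uL := le_add_of_nonneg_right hcsL0
    linarith [hx'.1]
  rw [hset, measure_union hdisjL measurableSet_Ico,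
    measure_iUnion hpair (fun k => measurableSet_Ico)]
  have hIco : ∀ k, volume (Set.Ico (u k) (u k + lv P k g h)) =
      ENNReal.ofReal (lv P k g h) := by
    intro k; rw [Real.volume_Ico]; congr 1; ring
  simp only [hIco, Real.volume_Ico]
  rw [← ENNReal.ofReal_tsum_of_nonneg (fun k => lv_nonneg P hnn hsum k g h)
    (summable_lv_k P hnn hsum g h), tsum_lv_k P hnn hsum]
  have harith : uL + (P g h - aInf P g h) - uL = P g h - aInf P g h := by ring
  rw [harith, ← ENNReal.ofReal_add (aInf_nonneg P hnn hsum g h)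
    (sub_nonneg.2 (aInf_le_P P hnn hsum g h))]
  congr 1
  ring

/-- (P0): measurability of `phi · h`. -/
lemma measurable_phi (h : ℕ → G) : Measurable fun x => phi P x h := by
  have hK : Measurable fun x : ℝ => pick (fun j => bsum P j h - Bf P j h) x := by
    apply measurable_pickP
      (p := fun n x => x < ∑ m ∈ Finset.range (n+1), (bsum P m h - Bf P m h))
    intro n
    exact measurableSet_lt measurable_id measurable_const
  have hN1 : Measurable fun x : ℝ =>
      pick (dex (fun g' => lv P (pick (fun j => bsum P j h - Bf P j h) x) g' h))
        (x - Bf P (pick (fun j => bsum P j h - Bf P j h) x) h) := by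
    apply measurable_pickP (p := fun n x =>
      x - Bf P (pick (fun j => bsum P j h - Bf P j h) x) h <
        ∑ m ∈ Finset.range (n+1),
          dex (fun g' => lv P (pick (fun j => bsum P j h - Bf P j h) x) g' h) m)
    intro n
    have heq : {x : ℝ | x - Bf P (pick (fun j => bsum P j h - Bf P j h) x) h <
        ∑ m ∈ Finset.range (n+1),
          dex (fun g' => lv P (pick (fun j => bsum P j h - Bf P j h) x) g' h) m} =
        ⋃ k, ((fun x : ℝ => pick (fun j => bsum P j h - Bf P j h) x) ⁻¹' {k} ∩
          {x : ℝ | x - Bf P k h <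
            ∑ m ∈ Finset.range (n+1), dex (fun g' => lv P k g' h) m}) := by
      ext x
      simp only [Set.mem_setOf_eq, Set.mem_iUnion, Set.mem_inter_iff, Set.mem_preimage,
        Set.mem_singleton_iff]
      constructor
      · intro hx
        exact ⟨pick (fun j => bsum P j h - Bf P j h) x, rfl, hx⟩
      · rintro ⟨k, rfl, hx⟩
        exact hx
    rw [heq]
    refine MeasurableSet.iUnion fun k => (hK (measurableSet_singleton k)).inter ?_
    exact measurableSet_lt (measurable_id.sub measurable_const) measurable_const
  have hN2 : Measurable fun x : ℝ =>
      pick (dex (fun g' => P g' h - aInf P g' h)) (x - Ssum P h) := by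
    apply measurable_pickP (p := fun n x =>
      x - Ssum P h < ∑ m ∈ Finset.range (n+1), dex (fun g' => P g' h - aInf P g' h) m)
    intro n
    exact measurableSet_lt (measurable_id.sub measurable_const) measurable_const
  have hgetD : Measurable fun n : ℕ => (Encodable.decode₂ G n).getD (Classical.arbitrary G) :=
    measurable_from_top
  unfold phi
  exact Measurable.ite (measurableSet_lt measurable_id measurable_const)
    (hgetD.comp hN1) (hgetD.comp hN2)


/-- history before step `n`: most recent first, then the frozen past `w`. -/
def HistOf (w xs : ℕ → G) (n : ℕ) : ℕ → G :=
  fun j => if j < n then xs (n - 1 - j) else w (j - n)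

/-- prefix of the process: `pref w n u m = X_m(u)` for `m < n`. -/
noncomputable def pref (w : ℕ → G) : ℕ → (ℤ → ℝ) → ℕ → G
  | 0, _, _ => Classical.arbitrary G
  | (n+1), u, m =>
      if m = n then phi P (u (n:ℤ)) (HistOf w (pref w n u) n) else pref w n u m

/-- the process driven by the uniforms `u`. -/
noncomputable def Xp (w : ℕ → G) (n : ℕ) (u : ℤ → ℝ) : G :=
  phi P (u (n:ℤ)) (HistOf w (pref P w n u) n)

omit hnn hsum in
lemma pref_eq_Xp (w : ℕ → G) (u : ℤ → ℝ) :
    ∀ n m, m < n → pref P w n u m = Xp P w m u := by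
  intro n
  induction n with
  | zero => intro m hm; omega
  | succ n ih =>
      intro m hm
      by_cases hmn : m = n
      · subst hmn
        show (if m = m then _ else _) = _
        rw [if_pos rfl]
        rfl
      · have hm' : m < n := by omega
        show (if m = n then _ else _) = _
        rw [if_neg hmn]
        exact ih m hm'

omit hnn hsum in
lemma hist_eq_of_agree (w gs : ℕ → G) (u : ℤ → ℝ) (m : ℕ)
    (hag : ∀ m' < m, Xp P w m' u = gs m') :
    HistOf w (pref P w m u) m = HistOf w gs m := by
  funext j
  unfold HistOf
  by_cases hj : j < m
  · rw [if_pos hj, if_pos hj, pref_eq_Xp P w u m (m - 1 - j) (by omega),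
      hag (m - 1 - j) (by omega)]
  · rw [if_neg hj, if_neg hj]

omit hnn hsum in
lemma Xp_cyl (w : ℕ → G) (N : ℕ) (gs : ℕ → G) :
    {u : ℤ → ℝ | ∀ m, m ≤ N → Xp P w m u = gs m} =
      ⋂ m ∈ Finset.range (N+1), (fun u : ℤ → ℝ => u (m:ℤ)) ⁻¹'
        ((fun x => phi P x (HistOf w gs m)) ⁻¹' {gs m}) := by
  ext u
  simp only [Set.mem_setOf_eq, Set.mem_iInter, Set.mem_preimage, Set.mem_singleton_iff,
    Finset.mem_range]
  constructor
  · intro hX m hm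
    have hag : ∀ m' < m, Xp P w m' u = gs m' := fun m' hm' => hX m' (by omega)
    have := hist_eq_of_agree P w gs u m hag
    rw [← this]
    exact hX m (by omega)
  · intro hphi
    intro m
    induction m using Nat.strong_induction_on with
    | _ m ih =>
      intro hm
      have hag : ∀ m' < m, Xp P w m' u = gs m' := fun m' hm' => ih m' hm' (by omega)
      have := hist_eq_of_agree P w gs u m hag
      unfold Xp
      rw [this]
      exact hphi m (by omega)

lemma measurable_XpAux (w : ℕ → G) (n : ℕ)
    (hpref : Measurable fun u : ℤ → ℝ => pref P w n u) :
    Measurable fun u : ℤ → ℝ => phi P (u (n:ℤ)) (HistOf w (pref P w n u) n) := by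
  apply measurable_to_countable'
  intro g
  have heq : (fun u : ℤ → ℝ => phi P (u (n:ℤ)) (HistOf w (pref P w n u) n)) ⁻¹' {g} =
      ⋃ vv : Fin n → G, ((⋂ i : Fin n, {u : ℤ → ℝ | pref P w n u i = vv i}) ∩
        ((fun u : ℤ → ℝ => u (n:ℤ)) ⁻¹'
          ((fun x => phi P x (HistOf w
            (fun j => if hj : j < n then vv ⟨j, hj⟩ else Classical.arbitrary G) n)) ⁻¹' {g}))) := by
    ext u
    simp only [Set.mem_preimage, Set.mem_singleton_iff, Set.mem_iUnion, Set.mem_inter_iff,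
      Set.mem_iInter, Set.mem_setOf_eq]
    have hkey : ∀ vv : Fin n → G, (∀ i : Fin n, pref P w n u i = vv i) →
        HistOf w (fun j => if hj : j < n then vv ⟨j, hj⟩ else Classical.arbitrary G) n =
          HistOf w (pref P w n u) n := by
      intro vv hvv
      funext j
      unfold HistOf
      by_cases hj : j < n
      · rw [if_pos hj, if_pos hj]
        have hlt : n - 1 - j < n := by omega
        show (if hj2 : n - 1 - j < n then vv ⟨n - 1 - j, hj2⟩ else Classical.arbitrary G) = _
        rw [dif_pos hlt, ← hvv ⟨n - 1 - j, hlt⟩]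
      · rw [if_neg hj, if_neg hj]
    constructor
    · intro hphi
      refine ⟨fun i => pref P w n u i, fun i => rfl, ?_⟩
      rw [hkey (fun i => pref P w n u i) (fun i => rfl)]
      exact hphi
    · rintro ⟨vv, hvv, hphi⟩
      rw [hkey vv hvv] at hphi
      exact hphi
  rw [heq]
  refine MeasurableSet.iUnion fun vv => MeasurableSet.inter ?_ ?_
  · exact MeasurableSet.iInter fun i =>
      ((measurable_pi_apply (i : ℕ)).comp hpref) (measurableSet_singleton (vv i))
  · exact (measurable_pi_apply (n:ℤ))
      ((measurable_phi P hnn hsum (HistOf w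
        (fun j => if hj : j < n then vv ⟨j, hj⟩ else Classical.arbitrary G) n))
        (measurableSet_singleton g))

lemma measurable_pref (w : ℕ → G) (n : ℕ) :
    Measurable fun u : ℤ → ℝ => pref P w n u := by
  induction n with
  | zero => exact measurable_const
  | succ n ih =>
      refine measurable_pi_lambda _ fun m => ?_
      by_cases hmn : m = n
      · subst hmn
        have : (fun u : ℤ → ℝ => pref P w (m+1) u m) =
            fun u : ℤ → ℝ => phi P (u (m:ℤ)) (HistOf w (pref P w m u) m) := by
          funext u
          show (if m = m then _ else _) = _
          rw [if_pos rfl]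
        rw [this]
        exact measurable_XpAux P hnn hsum w m ih
      · have : (fun u : ℤ → ℝ => pref P w (n+1) u m) =
            fun u : ℤ → ℝ => pref P w n u m := by
          funext u
          show (if m = n then _ else _) = _
          rw [if_neg hmn]
        rw [this]
        exact (measurable_pi_apply m).comp ih

lemma measurable_Xp (w : ℕ → G) (n : ℕ) : Measurable (Xp P w n) :=
  measurable_XpAux P hnn hsum w n (measurable_pref P hnn hsum w n)

lemma Xp_fdds (w : ℕ → G) (μ0 : Measure (ℤ → ℝ)) [IsProbabilityMeasure μ0]
    (hind : ProbabilityTheory.iIndepFun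
      (fun i (u : ℤ → ℝ) => u i) μ0)
    (hmarg : ∀ i : ℤ, μ0.map (fun u => u i) = volume.restrict (Set.Ico (0:ℝ) 1))
    (N : ℕ) (gs : ℕ → G) :
    μ0 {u : ℤ → ℝ | ∀ m, m ≤ N → Xp P w m u = gs m} =
      ENNReal.ofReal (∏ k ∈ Finset.range (N + 1), P (gs k) (HistOf w gs k)) := by
  set A : ℕ → Set ℝ := fun m => (fun x => phi P x (HistOf w gs m)) ⁻¹' {gs m} with hA
  have hAm : ∀ m, MeasurableSet (A m) := fun m =>
    (measurable_phi P hnn hsum (HistOf w gs m)) (measurableSet_singleton (gs m))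
  rw [Xp_cyl]
  set S : Finset ℤ := (Finset.range (N+1)).image (fun m : ℕ => (m:ℤ)) with hS
  set sets : ℤ → Set ℝ := fun i => A i.toNat with hsets
  have hinj : Set.InjOn (fun m : ℕ => (m:ℤ)) (Finset.range (N+1)) := fun a _ b _ hab => by
    simpa using hab
  have hseteq : (⋂ m ∈ Finset.range (N+1), (fun u : ℤ → ℝ => u (m:ℤ)) ⁻¹' A m) =
      ⋂ i ∈ S, (fun u : ℤ → ℝ => u i) ⁻¹' sets i := by
    ext u
    simp only [Set.mem_iInter, Finset.mem_range, hS, Finset.mem_image, hsets]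
    constructor
    · rintro hu i ⟨m, hm, rfl⟩
      simpa using hu m hm
    · intro hu m hm
      have := hu (m:ℤ) ⟨m, by simpa using hm, rfl⟩
      simpa using this
  rw [hseteq]
  rw [hind.measure_inter_preimage_eq_mul S (sets := sets)
    (fun i _ => hAm i.toNat)]
  rw [Finset.prod_image hinj]
  have hterm : ∀ m ∈ Finset.range (N+1),
      μ0 ((fun u : ℤ → ℝ => u (m:ℤ)) ⁻¹' sets (m:ℤ)) =
        ENNReal.ofReal (P (gs m) (HistOf w gs m)) := by
    intro m _
    have h1 : μ0 ((fun u : ℤ → ℝ => u (m:ℤ)) ⁻¹' sets (m:ℤ)) =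
        (μ0.map (fun u : ℤ → ℝ => u (m:ℤ))) (sets (m:ℤ)) := by
      rw [Measure.map_apply (measurable_pi_apply (m:ℤ))]
      have : sets (m:ℤ) = A m := by simp [hsets]
      rw [this]
      exact hAm m
    rw [h1, hmarg]
    have h2 : sets (m:ℤ) = A m := by simp [hsets]
    rw [h2, Measure.restrict_apply (hAm m)]
    exact phi_vol P hnn hsum (HistOf w gs m) (gs m)
  rw [Finset.prod_congr rfl hterm]
  rw [← ENNReal.ofReal_prod_of_nonneg (fun k _ => hnn (gs k) (HistOf w gs k))]


omit hnn hsum in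
lemma hoc_le (a : ℕ → ℝ) (u : ℤ → ℝ) : ∀ n, hoc a u 0 n ≤ n := by
  intro n
  induction n with
  | zero => exact le_rfl
  | succ n ih =>
      show (if u (0 + n + 1) < a (hoc a u 0 n) then hoc a u 0 n + 1 else 0) ≤ n + 1
      split
      · omega
      · omega

/-- pathwise agreement: wherever the house-of-cards chain is positive,
the two coupled processes agree. -/
lemma Xp_agree (w v : ℕ → G) (u : ℤ → ℝ) :
    ∀ n, ∀ j < hoc (akP P) u 0 n, Xp P w (n - j) u = Xp P v (n - j) u := by
  intro n
  induction n with
  | zero => intro j hj; simp [hoc] at hj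
  | succ n ih =>
      intro j hj
      have hunf : hoc (akP P) u 0 (n+1) =
          if u (0 + n + 1) < akP P (hoc (akP P) u 0 n)
            then hoc (akP P) u 0 n + 1 else 0 := rfl
      rw [hunf] at hj
      by_cases hcond : u (0 + n + 1) < akP P (hoc (akP P) u 0 n)
      · rw [if_pos hcond] at hj
        cases j with
        | succ j' =>
            have hidx : n + 1 - (j' + 1) = n - j' := by omega
            rw [hidx]
            exact ih j' (by omega)
        | zero =>
            simp only [Nat.sub_zero]
            have hdn : hoc (akP P) u 0 n ≤ n := hoc_le _ u n
            unfold Xp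
            refine phi_congr P hnn hsum (hoc (akP P) u 0 n) ?_ _ _ ?_
            · have hcast : (0 : ℤ) + n + 1 = ((n + 1 : ℕ) : ℤ) := by push_cast; ring
              rwa [hcast] at hcond
            · intro n' hn'
              have hlt : n' < n + 1 := by omega
              show HistOf w (pref P w (n+1) u) (n+1) n' = HistOf v (pref P v (n+1) u) (n+1) n'
              unfold HistOf
              rw [if_pos hlt, if_pos hlt, pref_eq_Xp P w u (n+1) (n+1-1-n') (by omega),
                pref_eq_Xp P v u (n+1) (n+1-1-n') (by omega)]
              have hidx : n + 1 - 1 - n' = n - n' := by omega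
              rw [hidx]
              exact ih n' (by omega)
      · rw [if_neg hcond] at hj
        omega

end enc

lemma measurable_hoc (a : ℕ → ℝ) (k : ℕ) : Measurable fun u : ℤ → ℝ => hoc a u 0 k := by
  induction k with
  | zero => exact measurable_const
  | succ k ih =>
      have hunf : (fun u : ℤ → ℝ => hoc a u 0 (k+1)) =
          fun u => if u (0 + k + 1) < a (hoc a u 0 k) then hoc a u 0 k + 1 else 0 := rfl
      rw [hunf]
      apply measurable_to_countable'
      intro m
      have heq : ((fun u : ℤ → ℝ =>
          if u (0 + k + 1) < a (hoc a u 0 k) then hoc a u 0 k + 1 else 0) ⁻¹' {m}) =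
          ⋃ d : ℕ, ((fun u : ℤ → ℝ => hoc a u 0 k) ⁻¹' {d} ∩
            ((fun u : ℤ → ℝ => u (0 + k + 1)) ⁻¹'
              {x : ℝ | (if x < a d then d + 1 else 0) = m})) := by
        ext u
        simp only [Set.mem_preimage, Set.mem_singleton_iff, Set.mem_iUnion, Set.mem_inter_iff,
          Set.mem_setOf_eq]
        constructor
        · intro hu
          exact ⟨hoc a u 0 k, rfl, hu⟩
        · rintro ⟨d, hd, hu⟩
          rw [hd]
          exact hu
      rw [heq]
      refine MeasurableSet.iUnion fun d => (ih (measurableSet_singleton d)).inter ?_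
      refine (measurable_pi_apply ((0:ℤ) + k + 1)) ?_
      rcases eq_or_ne m 0 with rfl | hm0
      · have hs : {x : ℝ | (if x < a d then d + 1 else 0) = 0} = {x | ¬ x < a d} := by
          ext x
          by_cases hc : x < a d <;> simp [hc]
        rw [hs]
        exact (measurableSet_lt measurable_id measurable_const).compl
      · rcases eq_or_ne m (d+1) with rfl | hm1
        · have hs : {x : ℝ | (if x < a d then d + 1 else 0) = d + 1} = {x | x < a d} := by
            ext x
            by_cases hc : x < a d <;> simp [hc]
          rw [hs]
          exact measurableSet_lt measurable_id measurable_const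
        · have hs : {x : ℝ | (if x < a d then d + 1 else 0) = m} = ∅ := by
            ext x
            by_cases hc : x < a d <;> simp [hc]
            · omega
            · omega
          rw [hs]
          exact MeasurableSet.empty

lemma integral_eq_tsum {α : Type*} [MeasurableSpace α] (μ : Measure α) [IsFiniteMeasure μ]
    {ι : Type*} [Countable ι] (S : ι → Set α) (hSm : ∀ i, MeasurableSet (S i))
    (hSd : Pairwise (Function.onFun Disjoint S)) (hSu : (⋃ i, S i) = Set.univ)
    (f : α → ℝ) (hf : Measurable f) (B : ℝ) (hB : ∀ a, |f a| ≤ B)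
    (c : ι → ℝ) (hc : ∀ i, ∀ a ∈ S i, f a = c i) :
    ∫ a, f a ∂μ = ∑' i, c i * (μ (S i)).toReal := by
  have hint : Integrable f μ :=
    Integrable.mono' (integrable_const B) hf.aestronglyMeasurable
      (ae_of_all _ fun a => by simpa using hB a)
  have h1 : ∫ a, f a ∂μ = ∫ a in (⋃ i, S i), f a ∂μ := by rw [hSu, setIntegral_univ]
  rw [h1, integral_iUnion hSm hSd hint.integrableOn]
  congr 1
  funext i
  rw [setIntegral_congr_fun (hSm i) (g := fun _ => c i) (fun a ha => hc i a ha),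
    setIntegral_const, smul_eq_mul, mul_comm]
  rfl

end S11

/-- loss of memory: for the chains `μw`, `μv` started at time `i`
from frozen pasts `w`, `v`, and any bounded measurable observable `f` of the window
`[s,t]` (coordinates `n` with `s - i ≤ n ≤ t - i`), the difference of expectations
is at most `2‖f‖_∞ ∑_{j=0}^{t-s} ρ_{s+j-i}`. -/
theorem stmt11 (P : G → (ℕ → G) → ℝ)
    (hPmeas : ∀ g, Measurable (P g)) (hPnonneg : ∀ g w, 0 ≤ P g w)
    (hPsum : ∀ w, HasSum (fun g => P g w) 1)
    (μ0 : Measure (ℤ → ℝ)) [IsProbabilityMeasure μ0] (hiid : IsIIDUniform μ0)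
    (i s t : ℤ) (his : i ≤ s) (hst : s ≤ t)
    (w v : ℕ → G)
    (μw μv : Measure (ℕ → G)) [IsProbabilityMeasure μw] [IsProbabilityMeasure μv]
    (hw : HasFdds P μw w) (hv : HasFdds P μv v)
    (f : (ℕ → G) → ℝ) (hfm : Measurable f)
    (B : ℝ) (hB : ∀ η, |f η| ≤ B)
    (hlocal : ∀ η η' : ℕ → G,
      (∀ n : ℕ, (s - i).toNat ≤ n → n ≤ (t - i).toNat → η n = η' n) → f η = f η') :
    |∫ η, f η ∂μw - ∫ η, f η ∂μv| ≤
      2 * B * ∑ j ∈ Finset.range ((t - s).toNat + 1),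
        (rho (akP P) μ0 ((s - i).toNat + j)).toReal := by
  classical
  obtain ⟨e⟩ := nonempty_encodable G
  letI := e
  set k0 := (s - i).toNat with hk0
  set L := (t - s).toNat with hL
  set N := (t - i).toNat with hN
  have hNk : N = k0 + L := by omega
  set X : (ℤ → ℝ) → (ℕ → G) := fun u n => S11.Xp P w n u with hX
  set Y : (ℤ → ℝ) → (ℕ → G) := fun u n => S11.Xp P v n u with hY
  have hXm : Measurable X :=
    measurable_pi_lambda _ fun n => S11.measurable_Xp P hPnonneg hPsum w n
  have hYm : Measurable Y :=
    measurable_pi_lambda _ fun n => S11.measurable_Xp P hPnonneg hPsum v n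
  set ext : ((Fin (N+1)) → G) → (ℕ → G) :=
    fun vs j => if hj : j < N+1 then vs ⟨j, hj⟩ else Classical.arbitrary G with hext
  set CS : ((Fin (N+1)) → G) → Set (ℕ → G) :=
    fun vs => {η | ∀ m, m ≤ N → η m = ext vs m} with hCS
  have hSm : ∀ vs, MeasurableSet (CS vs) := by
    intro vs
    have heq : CS vs = ⋂ m ∈ Finset.range (N+1), (fun η : ℕ → G => η m) ⁻¹' {ext vs m} := by
      ext η
      simp only [hCS, Set.mem_setOf_eq, Set.mem_iInter, Finset.mem_range, Set.mem_preimage,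
        Set.mem_singleton_iff]
      constructor
      · intro hη m hm; exact hη m (by omega)
      · intro hη m hm; exact hη m (by omega)
    rw [heq]
    exact MeasurableSet.biInter (Finset.countable_toSet _)
      fun m _ => (measurable_pi_apply m) (measurableSet_singleton _)
  have hSd : Pairwise (Function.onFun Disjoint CS) := by
    intro vs vs' hne
    obtain ⟨i0, hi0⟩ := Function.ne_iff.1 hne
    refine Set.disjoint_left.2 fun η hη hη' => ?_
    have h1 : η i0 = ext vs i0 := hη i0 (by omega)
    have h2 : η i0 = ext vs' i0 := hη' i0 (by omega)
    have h3 : ext vs i0 = vs i0 := by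
      simp only [hext]
      rw [dif_pos i0.isLt]
    have h4 : ext vs' i0 = vs' i0 := by
      simp only [hext]
      rw [dif_pos i0.isLt]
    exact hi0 (by rw [← h3, ← h4, ← h1, ← h2])
  have hSu : (⋃ vs, CS vs) = Set.univ := by
    refine Set.eq_univ_of_forall fun η => Set.mem_iUnion.2 ⟨fun i0 => η i0, ?_⟩
    intro m hm
    simp only [hext]
    rw [dif_pos (by omega : m < N+1)]
  have hconst : ∀ vs, ∀ η ∈ CS vs, f η = f (ext vs) := by
    intro vs η hη
    refine hlocal η (ext vs) fun n hn1 hn2 => hη n hn2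
  -- the integrals as sums over cylinders
  have hiw : ∫ η, f η ∂μw = ∑' vs, f (ext vs) * (μw (CS vs)).toReal :=
    S11.integral_eq_tsum μw CS hSm hSd hSu f hfm B hB _ hconst
  have hiv : ∫ η, f η ∂μv = ∑' vs, f (ext vs) * (μv (CS vs)).toReal :=
    S11.integral_eq_tsum μv CS hSm hSd hSu f hfm B hB _ hconst
  have hiX : ∫ u, f (X u) ∂μ0 = ∑' vs, f (ext vs) * (μ0 (X ⁻¹' (CS vs))).toReal := by
    refine S11.integral_eq_tsum μ0 (fun vs => X ⁻¹' (CS vs)) (fun vs => hXm (hSm vs))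
      (fun vs vs' hne => ((hSd hne).preimage X)) ?_ (fun u => f (X u)) (hfm.comp hXm) B
      (fun u => hB _) _ (fun vs u hu => hconst vs (X u) hu)
    rw [← Set.preimage_iUnion, hSu, Set.preimage_univ]
  have hiY : ∫ u, f (Y u) ∂μ0 = ∑' vs, f (ext vs) * (μ0 (Y ⁻¹' (CS vs))).toReal := by
    refine S11.integral_eq_tsum μ0 (fun vs => Y ⁻¹' (CS vs)) (fun vs => hYm (hSm vs))
      (fun vs vs' hne => ((hSd hne).preimage Y)) ?_ (fun u => f (Y u)) (hfm.comp hYm) B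
      (fun u => hB _) _ (fun vs u hu => hconst vs (Y u) hu)
    rw [← Set.preimage_iUnion, hSu, Set.preimage_univ]
  -- fdds matching
  have hXw : ∀ vs, μ0 (X ⁻¹' (CS vs)) = μw (CS vs) := by
    intro vs
    have h1 : X ⁻¹' (CS vs) = {u | ∀ m, m ≤ N → S11.Xp P w m u = ext vs m} := rfl
    rw [h1, S11.Xp_fdds P hPnonneg hPsum w μ0 hiid.1 hiid.2 N (ext vs), hw N (ext vs)]
    rfl
  have hYv : ∀ vs, μ0 (Y ⁻¹' (CS vs)) = μv (CS vs) := by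
    intro vs
    have h1 : Y ⁻¹' (CS vs) = {u | ∀ m, m ≤ N → S11.Xp P v m u = ext vs m} := rfl
    rw [h1, S11.Xp_fdds P hPnonneg hPsum v μ0 hiid.1 hiid.2 N (ext vs), hv N (ext vs)]
    rfl
  have hIw : ∫ η, f η ∂μw = ∫ u, f (X u) ∂μ0 := by
    rw [hiw, hiX]
    exact tsum_congr fun vs => by rw [hXw vs]
  have hIv : ∫ η, f η ∂μv = ∫ u, f (Y u) ∂μ0 := by
    rw [hiv, hiY]
    exact tsum_congr fun vs => by rw [hYv vs]
  -- integrability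
  have hFint : Integrable (fun u => f (X u)) μ0 :=
    Integrable.mono' (integrable_const B) (hfm.comp hXm).aestronglyMeasurable
      (ae_of_all _ fun u => by simpa using hB (X u))
  have hHint : Integrable (fun u => f (Y u)) μ0 :=
    Integrable.mono' (integrable_const B) (hfm.comp hYm).aestronglyMeasurable
      (ae_of_all _ fun u => by simpa using hB (Y u))
  -- the bad set
  set D : Set (ℤ → ℝ) := ⋃ j ∈ Finset.range (L+1), {u : ℤ → ℝ | hoc (akP P) u 0 (k0+j) = 0}
    with hD
  have hDm : MeasurableSet D := by
    refine MeasurableSet.biUnion (Finset.countable_toSet _) fun j _ => ?_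
    exact (S11.measurable_hoc (akP P) (k0+j)) (measurableSet_singleton 0)
  have hB0 : 0 ≤ B := le_trans (abs_nonneg _) (hB (fun _ => Classical.arbitrary G))
  have hpt : ∀ u, |f (X u) - f (Y u)| ≤ D.indicator (fun _ => 2*B) u := by
    intro u
    by_cases hu : u ∈ D
    · rw [Set.indicator_of_mem hu]
      calc |f (X u) - f (Y u)| ≤ |f (X u)| + |f (Y u)| := abs_sub _ _
        _ ≤ B + B := add_le_add (hB _) (hB _)
        _ = 2*B := by ring
    · rw [Set.indicator_of_notMem hu]
      have hagree : ∀ n, k0 ≤ n → n ≤ N → X u n = Y u n := by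
        intro n hn1 hn2
        have hj : n - k0 ∈ Finset.range (L+1) := by
          simp only [Finset.mem_range]
          omega
        have hne : hoc (akP P) u 0 n ≠ 0 := by
          intro hzero
          apply hu
          rw [hD]
          refine Set.mem_biUnion hj ?_
          have : k0 + (n - k0) = n := by omega
          rw [this]
          exact hzero
        have hpos : 0 < hoc (akP P) u 0 n := Nat.pos_of_ne_zero hne
        have := S11.Xp_agree P hPnonneg hPsum w v u n 0 hpos
        simpa using this
      have : f (X u) = f (Y u) := hlocal (X u) (Y u) hagree
      rw [this]
      simp
  have hkey : |∫ u, f (X u) ∂μ0 - ∫ u, f (Y u) ∂μ0| ≤ 2*B * (μ0 D).toReal := by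
    rw [← integral_sub hFint hHint]
    calc |∫ u, (f (X u) - f (Y u)) ∂μ0| ≤ ∫ u, |f (X u) - f (Y u)| ∂μ0 := by
          simpa [Real.norm_eq_abs] using
            norm_integral_le_integral_norm (μ := μ0) (fun u => f (X u) - f (Y u))
      _ ≤ ∫ u, D.indicator (fun _ => 2*B) u ∂μ0 := by
          refine integral_mono (hFint.sub hHint).abs ?_ hpt
          exact (integrable_const (2*B)).indicator hDm
      _ = (μ0 D).toReal • (2*B) := integral_indicator_const (2*B) hDm
      _ = 2*B * (μ0 D).toReal := by rw [smul_eq_mul]; ring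
  have hDle : (μ0 D).toReal ≤ ∑ j ∈ Finset.range (L+1),
      (rho (akP P) μ0 (k0 + j)).toReal := by
    have h1 : μ0 D ≤ ∑ j ∈ Finset.range (L+1), μ0 {u : ℤ → ℝ | hoc (akP P) u 0 (k0+j) = 0} :=
      measure_biUnion_finset_le _ _
    have h2 : (∑ j ∈ Finset.range (L+1),
        μ0 {u : ℤ → ℝ | hoc (akP P) u 0 (k0+j) = 0}) ≠ ⊤ := by
      refine (ENNReal.sum_lt_top.2 fun j _ => ?_).ne
      exact measure_lt_top μ0 _
    calc (μ0 D).toReal ≤ (∑ j ∈ Finset.range (L+1),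
          μ0 {u : ℤ → ℝ | hoc (akP P) u 0 (k0+j) = 0}).toReal :=
        ENNReal.toReal_mono h2 h1
      _ = ∑ j ∈ Finset.range (L+1), (rho (akP P) μ0 (k0 + j)).toReal := by
          rw [ENNReal.toReal_sum (fun j _ => (measure_lt_top μ0 _).ne)]
          rfl
  rw [hIw, hIv]
  calc |∫ u, f (X u) ∂μ0 - ∫ u, f (Y u) ∂μ0| ≤ 2*B * (μ0 D).toReal := hkey
    _ ≤ 2*B * ∑ j ∈ Finset.range (L+1), (rho (akP P) μ0 (k0 + j)).toReal := by
        refine mul_le_mul_of_nonneg_left hDle (by linarith)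
    _ = 2 * B * ∑ j ∈ Finset.range (L + 1), (rho (akP P) μ0 (k0 + j)).toReal := by ring

end
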